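/- Let H be a finite group whose order is divisible by a prime h. Then a cocycle ψ ∈ Z²(H, ⟨ζ_h⟩) is orthogonal (i.e., M_ψ ∈ BH(|H|, h)) if and only if {(1, x) : x ∈ H} is a (|H|, h, |H|, |H|/h)-relative difference set in E_ψ with forbidden subgroup ⟨(ζ_h, 1)⟩. -/

import Mathlib

open scoped BigOperators

noncomputable section

/-- `zeta k` is the complex `k`-th root of unity `exp(2π√-1/k)`. -/
def zeta (k : ℕ) : ℂ := Complex.exp (2 * Real.pi * Complex.I / k)

/-- A Butson Hadamard matrix in `BH(n,k)`. -/
def IsBH {ι : Type*} [Fintype ι] [DecidableEq ι] (n k : ℕ) (M : Matrix ι ι ℂ) : Prop :=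
  Fintype.card ι = n ∧ (∀ a b, ∃ j : ℕ, M a b = zeta k ^ j) ∧
    M * M.conjTranspose = (n : ℂ) • (1 : Matrix ι ι ℂ)

/-- A normalized cocycle `ψ : H × H → ⟨ζ_h⟩ ≅ ℤ_h` written in exponent (additive)
form: multiplicatively, `ψ(a,b)ψ(ab,c) = ψ(a,bc)ψ(b,c)` and `ψ(1,1) = 1`. -/
structure Cocyc (H : Type*) [Group H] (h : ℕ) where
  f : H → H → ZMod h
  coc : ∀ a b c, f a b + f (a * b) c = f a (b * c) + f b c
  norm : f 1 1 = 0

namespace Cocyc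

variable {H : Type*} [Group H] {h : ℕ} (ψ : Cocyc H h)

theorem f_one_left (g : H) : ψ.f 1 g = 0 := by
  have h1 := ψ.coc 1 1 g
  rw [one_mul, one_mul, ψ.norm, zero_add] at h1
  exact left_eq_add.mp h1

theorem f_one_right (g : H) : ψ.f g 1 = 0 := by
  have h1 := ψ.coc g 1 1
  rw [mul_one, mul_one, ψ.norm, add_zero] at h1
  exact add_eq_right.mp h1

theorem f_inv (g : H) : ψ.f g⁻¹ g = ψ.f g g⁻¹ := by
  have h1 := ψ.coc g g⁻¹ g
  rw [mul_inv_cancel, inv_mul_cancel, ψ.f_one_left, ψ.f_one_right, add_zero, zero_add] at h1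
  exact h1.symm

/-- The central extension `E_ψ` of `⟨ζ_h⟩` by `H` determined by the cocycle `ψ`:
the underlying set is `⟨ζ_h⟩ × H ≅ ℤ_h × H`, with multiplication
`(u,g)(v,g') = (u·v·ψ(g,g'), g·g')`. -/
@[ext]
structure Ext (ψ : Cocyc H h) where
  u : ZMod h
  x : H

variable {ψ}

instance : Mul (Ext ψ) := ⟨fun p q => ⟨p.u + q.u + ψ.f p.x q.x, p.x * q.x⟩⟩

@[simp] theorem mul_u (p q : Ext ψ) : (p * q).u = p.u + q.u + ψ.f p.x q.x := rfl
@[simp] theorem mul_x (p q : Ext ψ) : (p * q).x = p.x * q.x := rfl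

instance : One (Ext ψ) := ⟨⟨0, 1⟩⟩

@[simp] theorem one_u : (1 : Ext ψ).u = 0 := rfl
@[simp] theorem one_x : (1 : Ext ψ).x = 1 := rfl

instance : Inv (Ext ψ) := ⟨fun p => ⟨-p.u - ψ.f p.x p.x⁻¹, p.x⁻¹⟩⟩

@[simp] theorem inv_u (p : Ext ψ) : (p⁻¹).u = -p.u - ψ.f p.x p.x⁻¹ := rfl
@[simp] theorem inv_x (p : Ext ψ) : (p⁻¹).x = p.x⁻¹ := rfl

instance : Group (Ext ψ) where
  mul_assoc p q r := by
    ext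
    · show p.u + q.u + ψ.f p.x q.x + r.u + ψ.f (p.x * q.x) r.x
        = p.u + (q.u + r.u + ψ.f q.x r.x) + ψ.f p.x (q.x * r.x)
      linear_combination ψ.coc p.x q.x r.x
    · simp [mul_assoc]
  one_mul p := by
    ext
    · simp [ψ.f_one_left]
    · simp
  mul_one p := by
    ext
    · simp [ψ.f_one_right]
    · simp
  inv_mul_cancel p := by
    ext
    · show -p.u - ψ.f p.x p.x⁻¹ + p.u + ψ.f p.x⁻¹ p.x = 0
      rw [ψ.f_inv]
      ring
    · simp

end Cocyc

open Polynomial in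
section
namespace RdsAux
variable {h : ℕ}

lemma zeta_prim (hh : h ≠ 0) : IsPrimitiveRoot (zeta h) h :=
  Complex.isPrimitiveRoot_exp h hh

lemma zeta_pow_h (hh : h ≠ 0) : zeta h ^ h = 1 := (zeta_prim hh).pow_eq_one

lemma zeta_ne_zero : zeta h ≠ 0 := Complex.exp_ne_zero _

lemma pow_mod (hh : h ≠ 0) (a : ℕ) : zeta h ^ (a % h) = zeta h ^ a := by
  conv_rhs => rw [← Nat.div_add_mod a h]
  rw [pow_add, pow_mul, zeta_pow_h hh, one_pow, one_mul]

lemma pow_val_add (hh : h ≠ 0) (v w : ZMod h) :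
    zeta h ^ (v + w).val = zeta h ^ v.val * zeta h ^ w.val := by
  haveI : NeZero h := ⟨hh⟩
  rw [ZMod.val_add, pow_mod hh, pow_add]

lemma star_zeta (hh : h ≠ 0) : star (zeta h) = (zeta h)⁻¹ := by
  have habs : ‖zeta h‖ = 1 := Complex.norm_eq_one_of_pow_eq_one (zeta_pow_h hh) hh
  exact (Complex.inv_eq_conj habs).symm

lemma star_pow_val (hh : h ≠ 0) (w : ZMod h) :
    star (zeta h ^ w.val) = zeta h ^ (-w).val := by
  haveI : NeZero h := ⟨hh⟩
  have h1 : zeta h ^ w.val * zeta h ^ (-w).val = 1 := by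
    rw [← pow_val_add hh, add_neg_cancel, ZMod.val_zero, pow_zero]
  rw [star_pow, star_zeta hh, inv_pow]
  exact inv_eq_of_mul_eq_one_right h1

lemma mul_star (hh : h ≠ 0) (v w : ZMod h) :
    zeta h ^ v.val * star (zeta h ^ w.val) = zeta h ^ (v - w).val := by
  rw [star_pow_val hh, ← pow_val_add hh, sub_eq_add_neg]

lemma coeffs_eq (hp : Nat.Prime h) [NeZero h] (a : ZMod h → ℕ)
    (hz : ∑ u : ZMod h, (a u : ℂ) * zeta h ^ u.val = 0) :
    ∃ c : ℕ, ∀ u, a u = c := by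
  haveI : Fact (Nat.Prime h) := ⟨hp⟩
  set P : ℚ[X] := ∑ u : ZMod h, C (a u : ℚ) * X ^ u.val with hP
  have hcoeff : ∀ v : ZMod h, P.coeff v.val = (a v : ℚ) := by
    intro v
    rw [hP, finset_sum_coeff]
    have key : ∀ u : ZMod h, (C ((a u : ℚ)) * X ^ u.val).coeff v.val
        = if u = v then (a u : ℚ) else 0 := by
      intro u
      rw [coeff_C_mul, coeff_X_pow]
      by_cases hv : u = v
      · subst hv; simp
      · have hne : v.val ≠ u.val := fun hh => hv (ZMod.val_injective h hh).symm
        simp [hv, hne]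
    rw [Finset.sum_congr rfl fun u _ => key u, Finset.sum_ite_eq' Finset.univ v]
    simp
  have haev : Polynomial.aeval (zeta h) P = 0 := by
    rw [hP]
    simpa using hz
  have hdvd2 : cyclotomic h ℚ ∣ P := by
    rw [cyclotomic_eq_minpoly_rat (zeta_prim hp.pos.ne') hp.pos]
    exact minpoly.dvd ℚ (zeta h) haev
  obtain ⟨Q, hQ⟩ := hdvd2
  have hdegP : P.natDegree ≤ h - 1 := by
    apply Polynomial.natDegree_sum_le_of_forall_le
    intro u _
    calc (C ((a u : ℚ)) * X ^ u.val).natDegree ≤ u.val := by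
          apply le_trans (natDegree_C_mul_le _ _)
          simp
      _ ≤ h - 1 := Nat.le_sub_one_of_lt (ZMod.val_lt u)
  by_cases hQ0 : Q = 0
  · refine ⟨0, fun u => ?_⟩
    have hP0 : P = 0 := by rw [hQ, hQ0, mul_zero]
    have h2 := hcoeff u
    rw [hP0, coeff_zero] at h2
    exact_mod_cast h2.symm
  · have hdeg : P.natDegree = (h - 1) + Q.natDegree := by
      rw [hQ, natDegree_mul (cyclotomic_ne_zero h ℚ) hQ0, natDegree_cyclotomic,
        Nat.totient_prime hp]
    have hQdeg : Q.natDegree = 0 := by omega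
    obtain ⟨c, hc⟩ := natDegree_eq_zero.mp hQdeg
    have hcy : ∀ i < h, P.coeff i = c := by
      intro i hi
      rw [hQ, ← hc, mul_comm, coeff_C_mul, cyclotomic_prime ℚ h]
      simp only [finset_sum_coeff, coeff_X_pow]
      rw [Finset.sum_ite_eq (Finset.range h) i]
      simp [hi]
    have hall : ∀ u : ZMod h, (a u : ℚ) = c := fun u =>
      (hcoeff u).symm.trans (hcy u.val (ZMod.val_lt u))
    refine ⟨a 0, fun u => ?_⟩
    have : (a u : ℚ) = (a 0 : ℚ) := by rw [hall u, hall 0]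
    exact_mod_cast this

lemma zeta_pow_h' (hh : h ≠ 0) : zeta h ^ h = 1 := (zeta_prim hh).pow_eq_one

lemma sum_val_univ [NeZero h] :
    ∑ u : ZMod h, zeta h ^ u.val = ∑ i ∈ Finset.range h, zeta h ^ i := by
  refine Finset.sum_nbij' (fun u => u.val) (fun i => (i : ZMod h))
    (fun u _ => Finset.mem_range.2 (ZMod.val_lt u))
    (fun i _ => Finset.mem_univ _)
    (fun u _ => by simp [ZMod.natCast_val, ZMod.cast_id])
    (fun i hi => ZMod.val_natCast_of_lt (Finset.mem_range.1 hi))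
    (fun u _ => rfl)

/-- Key equidistribution lemma. -/
lemma sum_zeta_eq_zero_iff (hp : Nat.Prime h) {ι : Type*} [Fintype ι] [DecidableEq ι]
    (f : ι → ZMod h) (hdvd : h ∣ Fintype.card ι) :
    (∑ c, zeta h ^ (f c).val = 0) ↔
      ∀ u : ZMod h, (Finset.univ.filter fun c => f c = u).card = Fintype.card ι / h := by
  haveI : NeZero h := ⟨hp.pos.ne'⟩
  haveI : Fact (Nat.Prime h) := ⟨hp⟩
  set a : ZMod h → ℕ := fun u => (Finset.univ.filter fun c => f c = u).card with ha
  have hsum : ∑ c, zeta h ^ (f c).val = ∑ u : ZMod h, (a u : ℂ) * zeta h ^ u.val := by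
    rw [← Finset.sum_fiberwise Finset.univ f (fun c => zeta h ^ (f c).val)]
    refine Finset.sum_congr rfl fun u _ => ?_
    rw [Finset.sum_congr rfl (fun c hc => by
      rw [(Finset.mem_filter.1 hc).2]), Finset.sum_const, nsmul_eq_mul]
  have htot : ∑ u : ZMod h, a u = Fintype.card ι := by
    rw [ha, ← Finset.card_eq_sum_card_fiberwise (fun x _ => Finset.mem_univ (f x))]
    exact Finset.card_univ
  constructor
  · intro hz u
    obtain ⟨c, hc⟩ := coeffs_eq hp a (by rw [← hsum]; exact hz)
    have : ∑ u : ZMod h, a u = h * c := by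
      rw [Finset.sum_congr rfl fun u _ => hc u, Finset.sum_const, Finset.card_univ,
        ZMod.card, smul_eq_mul]
    rw [htot] at this
    show a u = _
    rw [hc u, this, Nat.mul_div_cancel_left _ hp.pos]
  · intro hu
    have hau : ∀ u : ZMod h, a u = Fintype.card ι / h := hu
    rw [hsum, Finset.sum_congr rfl fun u _ => by rw [hau u], ← Finset.mul_sum,
      sum_val_univ, (zeta_prim hp.pos.ne').geom_sum_eq_zero hp.one_lt, mul_zero]

variable {H : Type*} [Group H] {h : ℕ} {ψ : Cocyc H h}

def extEquiv (ψ : Cocyc H h) : Cocyc.Ext ψ ≃ ZMod h × H where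
  toFun e := (e.u, e.x)
  invFun p := ⟨p.1, p.2⟩
  left_inv e := rfl
  right_inv p := rfl

def projX (ψ : Cocyc H h) : Cocyc.Ext ψ →* H where
  toFun := Cocyc.Ext.x
  map_one' := rfl
  map_mul' _ _ := rfl

lemma gen_pow (k : ℕ) : (⟨1, 1⟩ : Cocyc.Ext ψ) ^ k = ⟨(k : ZMod h), 1⟩ := by
  induction k with
  | zero => ext <;> simp
  | succ n ih =>
    rw [pow_succ, ih]
    ext
    · show (n : ZMod h) + 1 + ψ.f 1 1 = ((n + 1 : ℕ) : ZMod h)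
      rw [ψ.norm]; push_cast; ring
    · simp

lemma mem_N_iff [NeZero h] (e : Cocyc.Ext ψ) :
    e ∈ Subgroup.zpowers (⟨1, 1⟩ : Cocyc.Ext ψ) ↔ e.x = 1 := by
  constructor
  · rintro ⟨k, rfl⟩
    show projX ψ _ = 1
    rw [map_zpow]
    have : projX ψ (⟨1, 1⟩ : Cocyc.Ext ψ) = 1 := rfl
    rw [this, one_zpow]
  · intro hx
    refine ⟨(e.u.val : ℤ), ?_⟩
    show (⟨1, 1⟩ : Cocyc.Ext ψ) ^ ((e.u.val : ℤ)) = e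
    rw [zpow_natCast, gen_pow]
    ext
    · simp [ZMod.natCast_val, ZMod.cast_id]
    · simp [hx]

lemma card_N (hp : Nat.Prime h) :
    Nat.card (Subgroup.zpowers (⟨1, 1⟩ : Cocyc.Ext ψ)) = h := by
  haveI : NeZero h := ⟨hp.pos.ne'⟩
  haveI : Fact (Nat.Prime h) := ⟨hp⟩
  rw [Nat.card_zpowers]
  apply orderOf_eq_prime
  · rw [gen_pow]; ext <;> simp
  · intro hcon
    have h1 : ((⟨1, 1⟩ : Cocyc.Ext ψ)).u = (1 : Cocyc.Ext ψ).u := by rw [hcon]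
    have : (1 : ZMod h) = 0 := h1
    exact one_ne_zero this

lemma mem_R_iff (e : Cocyc.Ext ψ) :
    e ∈ Set.range (fun x : H => (⟨0, x⟩ : Cocyc.Ext ψ)) ↔ e.u = 0 := by
  constructor
  · rintro ⟨x, rfl⟩; rfl
  · intro hu; exact ⟨e.x, by ext <;> simp [hu]⟩

lemma diff_eq (x y : H) :
    (⟨0, x⟩ : Cocyc.Ext ψ) * (⟨0, y⟩ : Cocyc.Ext ψ)⁻¹
      = ⟨ψ.f x y⁻¹ - ψ.f y y⁻¹, x * y⁻¹⟩ := by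
  ext
  · show 0 + (-0 - ψ.f y y⁻¹) + ψ.f x y⁻¹ = _
    ring
  · rfl

lemma diff_u (g y : H) : ψ.f (g * y) y⁻¹ - ψ.f y y⁻¹ = - ψ.f g y := by
  have hc := ψ.coc g y y⁻¹
  rw [mul_inv_cancel, ψ.f_one_right] at hc
  linear_combination hc

lemma coc_sub (g b c : H) : ψ.f (g * b) c - ψ.f b c = ψ.f g (b * c) - ψ.f g b := by
  linear_combination ψ.coc g b c


lemma count_card [Fintype H] [DecidableEq H] (e : Cocyc.Ext ψ) :
    Nat.card {p : (Set.range fun x : H => (⟨0, x⟩ : Cocyc.Ext ψ)) ×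
        (Set.range fun x : H => (⟨0, x⟩ : Cocyc.Ext ψ)) //
        (p.1 : Cocyc.Ext ψ) * (p.2 : Cocyc.Ext ψ)⁻¹ = e}
      = (Finset.univ.filter fun y : H => ψ.f e.x y = - e.u).card := by
  set R : Set (Cocyc.Ext ψ) := Set.range fun x : H => (⟨0, x⟩ : Cocyc.Ext ψ) with hR
  have hmem : ∀ y : H, (⟨0, y⟩ : Cocyc.Ext ψ) ∈ R := fun y => ⟨y, rfl⟩
  set F : {y : H // ψ.f e.x y = - e.u} →
      {p : R × R // (p.1 : Cocyc.Ext ψ) * (p.2 : Cocyc.Ext ψ)⁻¹ = e} :=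
    fun y => ⟨(⟨⟨0, e.x * y.1⟩, hmem _⟩, ⟨⟨0, y.1⟩, hmem _⟩), by
      rw [diff_eq, diff_u]
      ext
      · show - ψ.f e.x y.1 = e.u
        rw [y.2, neg_neg]
      · show e.x * y.1 * y.1⁻¹ = e.x
        rw [mul_inv_cancel_right]⟩ with hF
  have hbij : Function.Bijective F := by
    constructor
    · intro y y' hyy
      have : ((F y).1.2 : Cocyc.Ext ψ).x = ((F y').1.2 : Cocyc.Ext ψ).x := by rw [hyy]
      exact Subtype.ext this
    · rintro ⟨⟨r, s⟩, hq⟩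
      have hr : (r : Cocyc.Ext ψ).u = 0 := (mem_R_iff _).mp r.2
      have hs : (s : Cocyc.Ext ψ).u = 0 := (mem_R_iff _).mp s.2
      have hx : (r : Cocyc.Ext ψ).x * (s : Cocyc.Ext ψ).x⁻¹ = e.x := by
        rw [← hq]; rfl
      have hrx : (r : Cocyc.Ext ψ).x = e.x * (s : Cocyc.Ext ψ).x := by
        rw [← hx, inv_mul_cancel_right]
      have hu : (r : Cocyc.Ext ψ).u + (-(s : Cocyc.Ext ψ).u
            - ψ.f (s : Cocyc.Ext ψ).x (s : Cocyc.Ext ψ).x⁻¹)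
            + ψ.f (r : Cocyc.Ext ψ).x (s : Cocyc.Ext ψ).x⁻¹ = e.u := by
        rw [← hq]; rfl
      rw [hr, hs, hrx] at hu
      have hkey : ψ.f e.x (s : Cocyc.Ext ψ).x = - e.u := by
        have hd := diff_u (ψ := ψ) e.x (s : Cocyc.Ext ψ).x
        have : - ψ.f e.x (s : Cocyc.Ext ψ).x = e.u := by linear_combination hu - hd
        linear_combination -this
      refine ⟨⟨(s : Cocyc.Ext ψ).x, hkey⟩, ?_⟩
      apply Subtype.ext
      apply Prod.ext
      · apply Subtype.ext
        ext
        · exact hr.symm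
        · exact hrx.symm
      · apply Subtype.ext
        ext
        · exact hs.symm
        · rfl
  rw [← Nat.card_eq_of_bijective F hbij, Nat.card_eq_fintype_card, Fintype.card_subtype]


lemma entry_eq (hh : h ≠ 0) [Fintype H] (a b : H) :
    ∑ c : H, zeta h ^ (ψ.f a c).val * star (zeta h ^ (ψ.f b c).val)
    = (∑ c : H, zeta h ^ (ψ.f (a * b⁻¹) c).val)
        * star (zeta h ^ (ψ.f (a * b⁻¹) b).val) := by
  set g := a * b⁻¹ with hg
  have hab : g * b = a := inv_mul_cancel_right a b
  calc ∑ c : H, zeta h ^ (ψ.f a c).val * star (zeta h ^ (ψ.f b c).val)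
      = ∑ c : H, zeta h ^ (ψ.f g (b * c)).val * star (zeta h ^ (ψ.f g b).val) := by
        refine Finset.sum_congr rfl fun c _ => ?_
        rw [mul_star hh, mul_star hh]
        congr 1
        have hcs := coc_sub (ψ := ψ) g b c
        rw [hab] at hcs
        rw [hcs]
    _ = ∑ c : H, zeta h ^ (ψ.f g c).val * star (zeta h ^ (ψ.f g b).val) :=
        Fintype.sum_equiv (Equiv.mulLeft b)
          (fun c => zeta h ^ (ψ.f g (b * c)).val * star (zeta h ^ (ψ.f g b).val))
          (fun c => zeta h ^ (ψ.f g c).val * star (zeta h ^ (ψ.f g b).val))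
          (fun c => rfl)
    _ = _ := by rw [← Finset.sum_mul]


end RdsAux
end

/-- `R` is a `(v,n,k,λ)`-relative difference set in the group `E` relative
to the (forbidden) subgroup `N`: a `k`-subset of a transversal for `N` such that
every `x ∈ E ∖ N` has exactly `λ` representations `x = r·r'⁻¹` with `r, r' ∈ R`
(and no nonidentity element of `N` has such a representation). -/
def IsRDS {E : Type*} [Group E] (N : Subgroup E) (R : Set E) (v n k l : ℕ) : Prop :=
  N.index = v ∧ Nat.card N = n ∧ Nat.card R = k ∧
    (∀ r ∈ R, ∀ r' ∈ R, r * r'⁻¹ ∈ N → r = r') ∧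
    ∀ x : E, x ∉ N → Nat.card {p : R × R // (p.1 : E) * (p.2 : E)⁻¹ = x} = l

namespace RdsAux
variable {H : Type*} [Group H] {h : ℕ} {ψ : Cocyc H h}

lemma bh_iff [Fintype H] [DecidableEq H] (hp : Nat.Prime h) (ψ : Cocyc H h) :
    IsBH (Fintype.card H) h (Matrix.of fun a b : H => zeta h ^ (ψ.f a b).val)
      ↔ ∀ g : H, g ≠ 1 → ∑ c : H, zeta h ^ (ψ.f g c).val = 0 := by
  have hh : h ≠ 0 := hp.pos.ne'
  set M := Matrix.of fun a b : H => zeta h ^ (ψ.f a b).val with hM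
  have hentry : ∀ a b, (M * M.conjTranspose) a b
      = (∑ c : H, zeta h ^ (ψ.f (a * b⁻¹) c).val)
          * star (zeta h ^ (ψ.f (a * b⁻¹) b).val) := by
    intro a b
    rw [Matrix.mul_apply, ← entry_eq hh a b]
    rfl
  constructor
  · rintro ⟨-, -, hmat⟩ g hg
    have hev : (M * M.conjTranspose) g 1
        = ((Fintype.card H : ℂ) • (1 : Matrix H H ℂ)) g 1 := by rw [hmat]
    rw [hentry g 1, Matrix.smul_apply, Matrix.one_apply_ne hg, smul_zero] at hev
    simpa [ψ.f_one_right] using hev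
  · intro hS
    refine ⟨rfl, fun a b => ⟨(ψ.f a b).val, rfl⟩, ?_⟩
    ext a b
    rw [hentry a b, Matrix.smul_apply, Matrix.one_apply]
    by_cases hab : a = b
    · subst hab
      rw [mul_inv_cancel]
      have h1 : ∀ c : H, zeta h ^ (ψ.f 1 c).val = 1 := fun c => by
        rw [ψ.f_one_left, ZMod.val_zero, pow_zero]
      rw [Finset.sum_congr rfl fun c _ => h1 c, h1 a, Finset.sum_const,
        Finset.card_univ, if_pos rfl, smul_eq_mul, mul_one]
      simp
    · have hne : a * b⁻¹ ≠ 1 := fun hcon => hab (by rwa [mul_inv_eq_one] at hcon)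
      rw [hS _ hne, zero_mul, if_neg hab, smul_zero]

lemma rds_iff [Fintype H] [DecidableEq H] (hp : Nat.Prime h) (ψ : Cocyc H h) :
    IsRDS (Subgroup.zpowers (⟨1, 1⟩ : Cocyc.Ext ψ))
          (Set.range fun x : H => (⟨0, x⟩ : Cocyc.Ext ψ))
          (Fintype.card H) h (Fintype.card H) (Fintype.card H / h)
      ↔ ∀ g : H, g ≠ 1 → ∀ u : ZMod h,
        (Finset.univ.filter fun c => ψ.f g c = u).card = Fintype.card H / h := by
  haveI : NeZero h := ⟨hp.pos.ne'⟩
  have hcardExt : Nat.card (Cocyc.Ext ψ) = h * Fintype.card H := by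
    rw [Nat.card_congr (extEquiv ψ), Nat.card_prod, Nat.card_zmod, Nat.card_eq_fintype_card]
  have hN : Nat.card (Subgroup.zpowers (⟨1, 1⟩ : Cocyc.Ext ψ)) = h := card_N hp
  have hidx : (Subgroup.zpowers (⟨1, 1⟩ : Cocyc.Ext ψ)).index = Fintype.card H := by
    have hmi := Subgroup.card_mul_index (Subgroup.zpowers (⟨1, 1⟩ : Cocyc.Ext ψ))
    rw [hN, hcardExt] at hmi
    exact Nat.eq_of_mul_eq_mul_left hp.pos hmi
  have hinj : Function.Injective (fun x : H => (⟨0, x⟩ : Cocyc.Ext ψ)) :=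
    fun x y hxy => congrArg Cocyc.Ext.x hxy
  have hcardR : Nat.card (Set.range fun x : H => (⟨0, x⟩ : Cocyc.Ext ψ)) = Fintype.card H := by
    rw [Nat.card_range_of_injective hinj, Nat.card_eq_fintype_card]
  constructor
  · rintro ⟨-, -, -, -, hcount⟩ g hg u
    have hge : (⟨-u, g⟩ : Cocyc.Ext ψ) ∉ Subgroup.zpowers (⟨1, 1⟩ : Cocyc.Ext ψ) := by
      rw [mem_N_iff]; exact hg
    have hc := hcount _ hge
    rw [count_card] at hc
    have : (⟨-u, g⟩ : Cocyc.Ext ψ).x = g := rfl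
    simpa [neg_neg] using hc
  · intro hkey
    refine ⟨hidx, hN, hcardR, ?_, ?_⟩
    · rintro r hr r' hr' hmem
      rw [mem_N_iff] at hmem
      rw [mem_R_iff] at hr hr'
      have hrx : r.x = r'.x := by
        have hh1 : r.x * r'.x⁻¹ = 1 := hmem
        rwa [mul_inv_eq_one] at hh1
      ext
      · rw [hr, hr']
      · exact hrx
    · intro e he
      rw [mem_N_iff] at he
      rw [count_card]
      exact hkey e.x he (- e.u)

end RdsAux

/-- for a finite group `H` of order divisible by a prime `h`,
a cocycle `ψ ∈ Z²(H,⟨ζ_h⟩)` is orthogonal (`M_ψ ∈ BH(|H|,h)`) iff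
`{(1,x) : x ∈ H}` is a `(|H|, h, |H|, |H|/h)`-relative difference set in `E_ψ`
with forbidden subgroup `⟨(ζ_h,1)⟩`. -/
theorem orthogonal_iff_RDS
    {H : Type*} [Group H] [Fintype H] [DecidableEq H]
    (h : ℕ) (hp : Nat.Prime h) (hdvd : h ∣ Fintype.card H)
    (ψ : Cocyc H h) :
    IsBH (Fintype.card H) h
        (Matrix.of fun a b : H => zeta h ^ (ψ.f a b).val)
      ↔ IsRDS (Subgroup.zpowers (⟨1, 1⟩ : Cocyc.Ext ψ))
          (Set.range fun x : H => (⟨0, x⟩ : Cocyc.Ext ψ))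
          (Fintype.card H) h (Fintype.card H) (Fintype.card H / h) := by
  rw [RdsAux.bh_iff hp ψ, RdsAux.rds_iff hp ψ]
  exact forall_congr' fun g => imp_congr_right fun _ =>
    RdsAux.sum_zeta_eq_zero_iff hp _ hdvd

end
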